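/- The total number of Sturmian factors of length n equals 1 + Σ_{q=1}^{n} φ(q)(n+1−q), where φ is Euler's totient function. -/

import Mathlib

/-- The lower mechanical word of slope `σ` and intercept `ρ`. -/
noncomputable def lowerMech (σ ρ : ℝ) (n : ℕ) : ℤ :=
  ⌊(n + 1) * σ + ρ⌋ - ⌊n * σ + ρ⌋

/-- The prefix of length `n` of the lower mechanical word of slope `σ` and intercept `ρ`. -/
noncomputable def mechPrefix (σ ρ : ℝ) (n : ℕ) : List ℤ :=
  (List.range n).map (fun k => lowerMech σ ρ k)

/-- The set of Sturmian factors of length `n`: words of the form `s_{σ,ρ}[0..n)`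
for some irrational slope `σ ∈ (0,1)` and some intercept `ρ ∈ [0,1)`. -/
def SturmianFactors (n : ℕ) : Set (List ℤ) :=
  {u | ∃ σ ρ : ℝ, Irrational σ ∧ 0 < σ ∧ σ < 1 ∧ 0 ≤ ρ ∧ ρ < 1 ∧ u = mechPrefix σ ρ n}

namespace SturmAux


def Dom (σ ρ : ℝ) : Prop := 0 < σ ∧ σ < 1 ∧ 0 ≤ ρ ∧ ρ < 1

noncomputable def vec (n : ℕ) (σ ρ : ℝ) : ℕ → ℤ :=
  fun k => if k ≤ n then ⌊(k : ℝ) * σ + ρ⌋ else 0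

def A (n : ℕ) : Set (ℕ → ℤ) := {g | ∃ σ ρ : ℝ, Dom σ ρ ∧ vec n σ ρ = g}

def Fib (n : ℕ) (g : ℕ → ℤ) : Set (ℝ × ℝ) :=
  {p | Dom p.1 p.2 ∧ ∀ k ≤ n, ((g k : ℝ) ≤ k * p.1 + p.2 ∧ k * p.1 + p.2 < g k + 1)}

noncomputable def hgt (n : ℕ) (p : ℝ × ℝ) : ℝ := ((n : ℝ) + 1) * p.1 + p.2

def Eset (n : ℕ) (g : ℕ → ℤ) : Set ℤ := {m | ∃ p ∈ Fib n g, ⌊hgt n p⌋ = m}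

def Splits (n : ℕ) (g : ℕ → ℤ) : Set ℤ :=
  {m | (∃ p ∈ Fib n g, hgt n p < m) ∧ (∃ p ∈ Fib n g, (m : ℝ) ≤ hgt n p)}

def Tset (n : ℕ) : Set ((ℕ → ℤ) × ℤ) := {x | x.1 ∈ A n ∧ x.2 ∈ Eset n x.1}
def Sset (n : ℕ) : Set ((ℕ → ℤ) × ℤ) := {x | x.1 ∈ A n ∧ x.2 ∈ Splits n x.1}

def trunc (n : ℕ) (g : ℕ → ℤ) : ℕ → ℤ := fun k => if k ≤ n then g k else 0

lemma A_pad {n : ℕ} {g : ℕ → ℤ} (hg : g ∈ A n) : ∀ k, n < k → g k = 0 := by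
  obtain ⟨σ, ρ, _, rfl⟩ := hg
  intro k hk
  simp [vec, Nat.not_le.mpr hk]

lemma nonneg_aux {σ ρ : ℝ} (hD : Dom σ ρ) (k : ℕ) : 0 ≤ (k : ℝ) * σ + ρ := by
  have := hD.1; have := hD.2.2.1
  positivity

lemma lt_aux {σ ρ : ℝ} (hD : Dom σ ρ) (k : ℕ) : (k : ℝ) * σ + ρ < k + 1 := by
  obtain ⟨h1, h2, h3, h4⟩ := hD
  nlinarith [Nat.cast_nonneg (α := ℝ) k]

lemma vec_bounds {n : ℕ} {σ ρ : ℝ} (hD : Dom σ ρ) (k : ℕ) :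
    0 ≤ vec n σ ρ k ∧ vec n σ ρ k ≤ n := by
  unfold vec
  by_cases hk : k ≤ n
  · simp only [hk, if_pos]
    constructor
    · exact Int.floor_nonneg.mpr (nonneg_aux hD k)
    · have h2 : (k : ℝ) * σ + ρ < (n : ℝ) + 1 := by
        have := lt_aux hD k
        have : (k : ℝ) ≤ n := by exact_mod_cast hk
        nlinarith [lt_aux hD k]
      have : ⌊(k : ℝ) * σ + ρ⌋ < (n : ℤ) + 1 := by
        rw [Int.floor_lt]; push_cast; linarith
      omega
  · simp [hk]

lemma A_zero {n : ℕ} {g : ℕ → ℤ} (hg : g ∈ A n) : g 0 = 0 := by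
  obtain ⟨σ, ρ, hD, rfl⟩ := hg
  have h0 : (0:ℕ) ≤ n := Nat.zero_le n
  simp only [vec, h0, if_pos, Nat.cast_zero, zero_mul, zero_add]
  rw [Int.floor_eq_iff]
  constructor
  · exact_mod_cast hD.2.2.1
  · push_cast; linarith [hD.2.2.2]

lemma fib_of_vec {n : ℕ} {σ ρ : ℝ} (hD : Dom σ ρ) : (σ, ρ) ∈ Fib n (vec n σ ρ) := by
  refine ⟨hD, fun k hk => ?_⟩
  simp only [vec, hk, if_pos]
  exact ⟨Int.floor_le _, Int.lt_floor_add_one _⟩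

lemma fib_mem {n : ℕ} {g : ℕ → ℤ} {σ ρ : ℝ} (hD : Dom σ ρ) (h : vec n σ ρ = g) :
    (σ, ρ) ∈ Fib n g := h ▸ fib_of_vec hD

lemma vec_eq_of_fib {n : ℕ} {g : ℕ → ℤ} {p : ℝ × ℝ}
    (hpad : ∀ k, n < k → g k = 0) (hp : p ∈ Fib n g) : vec n p.1 p.2 = g := by
  funext k
  by_cases hk : k ≤ n
  · obtain ⟨h1, h2⟩ := hp.2 k hk
    simp only [vec, hk, if_pos]
    rw [Int.floor_eq_iff]
    exact ⟨h1, h2⟩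
  · simp [vec, hk, hpad k (Nat.not_le.mp hk)]

lemma mem_A_of_fib {n : ℕ} {g : ℕ → ℤ} {p : ℝ × ℝ}
    (hpad : ∀ k, n < k → g k = 0) (hp : p ∈ Fib n g) : g ∈ A n :=
  ⟨p.1, p.2, hp.1, vec_eq_of_fib hpad hp⟩

lemma A_finite (n : ℕ) : (A n).Finite := by
  apply Set.Finite.of_finite_image (f := fun g => fun k : Fin (n+1) => g k)
  · apply Set.Finite.subset (Set.Finite.pi (fun _ : Fin (n+1) => Set.finite_Icc (0:ℤ) n))
    rintro _ ⟨g, hg, rfl⟩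
    intro k _
    obtain ⟨σ, ρ, hD, rfl⟩ := hg
    exact vec_bounds hD k
  · intro g hg g' hg' h
    funext k
    by_cases hk : k ≤ n
    · exact congrFun h ⟨k, Nat.lt_succ_of_le hk⟩
    · rw [A_pad hg k (Nat.not_le.mp hk), A_pad hg' k (Nat.not_le.mp hk)]

lemma cvx_le {a u v t : ℝ} (h1 : a ≤ u) (h2 : a ≤ v) (ht0 : 0 ≤ t) (ht1 : t ≤ 1) :
    a ≤ (1 - t) * u + t * v := by
  nlinarith [mul_nonneg (sub_nonneg.2 h1) (sub_nonneg.2 ht1), mul_nonneg (sub_nonneg.2 h2) ht0]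

lemma cvx_lt {u v b t : ℝ} (h1 : u < b) (h2 : v < b) (ht0 : 0 ≤ t) (ht1 : t ≤ 1) :
    (1 - t) * u + t * v < b := by
  rcases eq_or_lt_of_le ht0 with h | h
  · nlinarith
  · nlinarith [mul_pos (sub_pos.2 h2) h, mul_nonneg (sub_nonneg.2 h1.le) (sub_nonneg.2 ht1)]

lemma cvx_lt' {u v b t : ℝ} (h1 : b < u) (h2 : b < v) (ht0 : 0 ≤ t) (ht1 : t ≤ 1) :
    b < (1 - t) * u + t * v := by
  rcases eq_or_lt_of_le ht0 with h | h
  · nlinarith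
  · nlinarith [mul_pos (sub_pos.2 h2) h, mul_nonneg (sub_nonneg.2 h1.le) (sub_nonneg.2 ht1)]

lemma fib_convex {n : ℕ} {g : ℕ → ℤ} {x y : ℝ × ℝ} (hx : x ∈ Fib n g) (hy : y ∈ Fib n g)
    {t : ℝ} (ht0 : 0 ≤ t) (ht1 : t ≤ 1) :
    ((1 - t) * x.1 + t * y.1, (1 - t) * x.2 + t * y.2) ∈ Fib n g := by
  obtain ⟨⟨hx1, hx2, hx3, hx4⟩, hxk⟩ := hx
  obtain ⟨⟨hy1, hy2, hy3, hy4⟩, hyk⟩ := hy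
  refine ⟨⟨cvx_lt' hx1 hy1 ht0 ht1, cvx_lt hx2 hy2 ht0 ht1,
    cvx_le hx3 hy3 ht0 ht1, cvx_lt hx4 hy4 ht0 ht1⟩, fun k hk => ?_⟩
  obtain ⟨ha, hb⟩ := hxk k hk
  obtain ⟨hc, hd⟩ := hyk k hk
  have e1 : (k:ℝ) * ((1 - t) * x.1 + t * y.1) + ((1 - t) * x.2 + t * y.2)
      = (1 - t) * ((k:ℝ) * x.1 + x.2) + t * ((k:ℝ) * y.1 + y.2) := by ring
  simp only
  rw [e1]
  exact ⟨cvx_le ha hc ht0 ht1, cvx_lt hb hd ht0 ht1⟩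

lemma splits_line {n : ℕ} {g : ℕ → ℤ} {m : ℤ} (hm : m ∈ Splits n g) :
    ∃ p ∈ Fib n g, hgt n p = m := by
  obtain ⟨⟨x, hx, hxm⟩, ⟨y, hy, hym⟩⟩ := hm
  have hd : 0 < hgt n y - hgt n x := by linarith
  set t : ℝ := ((m : ℝ) - hgt n x) / (hgt n y - hgt n x) with hT
  have ht0 : 0 ≤ t := div_nonneg (by linarith) hd.le
  have ht1 : t ≤ 1 := by
    rw [div_le_one hd]; linarith
  refine ⟨((1 - t) * x.1 + t * y.1, (1 - t) * x.2 + t * y.2),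
    fib_convex hx hy ht0 ht1, ?_⟩
  have : hgt n ((1 - t) * x.1 + t * y.1, (1 - t) * x.2 + t * y.2)
      = hgt n x + t * (hgt n y - hgt n x) := by
    simp only [hgt]; ring
  rw [this, hT, div_mul_cancel₀ _ (ne_of_gt hd)]
  ring

lemma splits_subset_E {n : ℕ} {g : ℕ → ℤ} : Splits n g ⊆ Eset n g := by
  intro m hm
  obtain ⟨p, hp, hpm⟩ := splits_line hm
  exact ⟨p, hp, by rw [hpm, Int.floor_intCast]⟩

lemma mem_splits_iff {n : ℕ} {g : ℕ → ℤ} {m : ℤ} :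
    m ∈ Splits n g ↔ m ∈ Eset n g ∧ ∃ m' ∈ Eset n g, m' < m := by
  constructor
  · intro hm
    refine ⟨splits_subset_E hm, ?_⟩
    obtain ⟨⟨x, hx, hxm⟩, _⟩ := hm
    refine ⟨⌊hgt n x⌋, ⟨x, hx, rfl⟩, ?_⟩
    rw [Int.floor_lt]; exact hxm
  · rintro ⟨⟨y, hy, hym⟩, ⟨m', ⟨x, hx, hxm⟩, hlt⟩⟩
    constructor
    · refine ⟨x, hx, ?_⟩
      have h1 : hgt n x < (m' : ℝ) + 1 := by rw [← hxm]; exact Int.lt_floor_add_one _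
      have h2 : (m' : ℝ) + 1 ≤ m := by exact_mod_cast hlt
      linarith
    · refine ⟨y, hy, ?_⟩
      rw [← hym]; exact Int.floor_le _

lemma E_nonneg {n : ℕ} {g : ℕ → ℤ} {m : ℤ} (hm : m ∈ Eset n g) : 0 ≤ m := by
  obtain ⟨p, hp, rfl⟩ := hm
  apply Int.floor_nonneg.mpr
  have h1 := hp.1.1
  have h2 := hp.1.2.2.1
  have : (0:ℝ) ≤ ((n:ℝ)+1) * p.1 := by positivity
  simp only [hgt]; linarith

lemma E_le {n : ℕ} {g : ℕ → ℤ} {m : ℤ} (hm : m ∈ Eset n g) : m ≤ n + 1 := by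
  obtain ⟨p, hp, rfl⟩ := hm
  obtain ⟨h1, h2, h3, h4⟩ := hp.1
  have : hgt n p < (n:ℝ) + 2 := by simp only [hgt]; nlinarith [Nat.cast_nonneg (α := ℝ) n]
  have : ⌊hgt n p⌋ < (n : ℤ) + 2 := by rw [Int.floor_lt]; push_cast; linarith
  omega

lemma E_finite (n : ℕ) (g : ℕ → ℤ) : (Eset n g).Finite := by
  apply Set.Finite.subset (Set.finite_Icc (0:ℤ) (n+1))
  intro m hm
  exact Set.mem_Icc.mpr ⟨E_nonneg hm, E_le hm⟩


lemma fib_subset_lower {n : ℕ} {g : ℕ → ℤ} {p : ℝ × ℝ} (hp : p ∈ Fib (n+1) g) :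
    p ∈ Fib n (trunc n g) := by
  refine ⟨hp.1, fun k hk => ?_⟩
  have := hp.2 k (le_trans hk (Nat.le_succ n))
  simpa [trunc, hk] using this

lemma trunc_vec (n : ℕ) (σ ρ : ℝ) : trunc n (vec (n+1) σ ρ) = vec n σ ρ := by
  funext k
  by_cases hk : k ≤ n
  · simp [trunc, vec, hk, le_trans hk (Nat.le_succ n)]
  · simp [trunc, vec, hk]

lemma theta_injOn (n : ℕ) :
    Set.InjOn (fun g => (trunc n g, g (n+1))) (A (n+1)) := by
  intro g hg g' hg' h
  simp only [Prod.mk.injEq] at h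
  funext k
  rcases lt_trichotomy k (n+1) with hk | hk | hk
  · have := congrFun h.1 k
    simpa [trunc, Nat.lt_succ_iff.mp hk] using this
  · rw [hk]; exact h.2
  · rw [A_pad hg k hk, A_pad hg' k hk]

lemma theta_image (n : ℕ) :
    (fun g => (trunc n g, g (n+1))) '' (A (n+1)) = Tset n := by
  ext x
  constructor
  · rintro ⟨g, ⟨σ, ρ, hD, rfl⟩, rfl⟩
    simp only [Tset, Set.mem_setOf_eq, trunc_vec n σ ρ]
    refine ⟨⟨σ, ρ, hD, rfl⟩, ?_⟩
    refine ⟨(σ, ρ), fib_of_vec hD, ?_⟩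
    have hv : vec (n+1) σ ρ (n+1) = ⌊((n+1:ℕ) : ℝ) * σ + ρ⌋ := by simp [vec]
    rw [hv]
    congr 1
    simp only [hgt]
    push_cast
    ring
  · rintro ⟨hx1, p, hp, hfl⟩
    refine ⟨vec (n+1) p.1 p.2, ⟨p.1, p.2, hp.1, rfl⟩, ?_⟩
    have h1 : trunc n (vec (n+1) p.1 p.2) = x.1 := by
      rw [trunc_vec]
      exact vec_eq_of_fib (A_pad hx1) hp
    have h2 : vec (n+1) p.1 p.2 (n+1) = x.2 := by
      have hv : vec (n+1) p.1 p.2 (n+1) = ⌊((n+1:ℕ) : ℝ) * p.1 + p.2⌋ := by simp [vec]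
      rw [hv, ← hfl]
      congr 1
      simp only [hgt]
      push_cast
      ring
    simp only [h1, h2]

/-- least element of `Eset` -/
lemma E_exists_min {n : ℕ} {g : ℕ → ℤ} (hg : g ∈ A n) :
    ∃ m ∈ Eset n g, ∀ m' ∈ Eset n g, m ≤ m' := by
  obtain ⟨σ, ρ, hD, hv⟩ := hg
  have hne : (Eset n g).Nonempty := ⟨⌊hgt n (σ, ρ)⌋, (σ, ρ), fib_mem hD hv, rfl⟩
  obtain ⟨m, hm, hmin⟩ := Set.exists_min_image (Eset n g) id (E_finite n g) hne
  exact ⟨m, hm, hmin⟩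

lemma Tdiff_image (n : ℕ) : Prod.fst '' (Tset n \ Sset n) = A n := by
  ext g
  constructor
  · rintro ⟨x, ⟨hx, _⟩, rfl⟩
    exact hx.1
  · intro hg
    obtain ⟨m, hm, hmin⟩ := E_exists_min hg
    refine ⟨(g, m), ⟨⟨hg, hm⟩, ?_⟩, rfl⟩
    intro hS
    obtain ⟨_, m', hm', hlt⟩ := mem_splits_iff.mp hS.2
    exact absurd (hmin m' hm') (by omega)

lemma Tdiff_injOn (n : ℕ) : Set.InjOn Prod.fst (Tset n \ Sset n) := by
  rintro ⟨g, m⟩ ⟨⟨hg, hm⟩, hnS⟩ ⟨g', m'⟩ ⟨⟨hg', hm'⟩, hnS'⟩ h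
  simp only at h
  subst h
  have h1 : ¬ m ∈ Splits n g := fun hc => hnS ⟨hg, hc⟩
  have h2 : ¬ m' ∈ Splits n g := fun hc => hnS' ⟨hg', hc⟩
  rw [mem_splits_iff] at h1 h2
  push_neg at h1 h2
  have e1 : m ≤ m' := h1 hm m' hm'
  have e2 : m' ≤ m := h2 hm' m hm
  have : m = m' := le_antisymm e1 e2
  subst this
  rfl

lemma Tset_finite (n : ℕ) : (Tset n).Finite := by
  rw [← theta_image n]
  exact Set.Finite.image _ (A_finite (n+1))

lemma step_card (n : ℕ) :
    (A (n+1)).ncard = (A n).ncard + (Sset n).ncard := by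
  have h1 : (A (n+1)).ncard = (Tset n).ncard := by
    rw [← theta_image n, Set.ncard_image_of_injOn (theta_injOn n)]
  have hsub : Sset n ⊆ Tset n := fun x hx => ⟨hx.1, splits_subset_E hx.2⟩
  have h2 : ((Tset n) \ (Sset n)).ncard + (Sset n).ncard = (Tset n).ncard :=
    Set.ncard_diff_add_ncard_of_subset hsub (Tset_finite n)
  have h3 : ((Tset n) \ (Sset n)).ncard = (A n).ncard := by
    rw [← Tdiff_image n, Set.ncard_image_of_injOn (Tdiff_injOn n)]
  omega


noncomputable def ubq (n : ℕ) (g : ℕ → ℤ) (m : ℤ) (k : ℕ) : ℚ :=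
  ((m - g k : ℤ) : ℚ) / ((n + 1 - k : ℕ) : ℚ)

lemma range_ne (n : ℕ) : (Finset.range (n+1)).Nonempty := ⟨0, by simp⟩

noncomputable def sigmaStar (n : ℕ) (g : ℕ → ℤ) (m : ℤ) : ℚ :=
  min 1 ((Finset.range (n+1)).inf' (range_ne n) (ubq n g m))

lemma cq_cast {n k : ℕ} (hk : k ≤ n) : ((n + 1 - k : ℕ) : ℚ) = (n : ℚ) + 1 - k := by
  have : k ≤ n + 1 := le_trans hk (Nat.le_succ n)
  push_cast [Nat.cast_sub this]
  ring

lemma cq_cast_real {n k : ℕ} (hk : k ≤ n) : ((n + 1 - k : ℕ) : ℝ) = (n : ℝ) + 1 - k := by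
  have : k ≤ n + 1 := le_trans hk (Nat.le_succ n)
  push_cast [Nat.cast_sub this]
  ring

lemma cq_pos {n k : ℕ} (hk : k ≤ n) : (0 : ℚ) < ((n + 1 - k : ℕ) : ℚ) := by
  have : 0 < n + 1 - k := by omega
  exact_mod_cast this

lemma cr_pos {n k : ℕ} (hk : k ≤ n) : (0 : ℝ) < (n : ℝ) + 1 - k := by
  rw [← cq_cast_real hk]
  have : 0 < n + 1 - k := by omega
  exact_mod_cast this

/-- The basic on-line point construction. -/
lemma point_in_fib {n : ℕ} {g : ℕ → ℤ} {m : ℤ} (hg0 : g 0 = 0) {σ : ℝ}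
    (h1 : ∀ k ≤ n, ((m : ℝ) - g k - 1) < ((n : ℝ) + 1 - k) * σ)
    (h2 : ∀ k ≤ n, ((n : ℝ) + 1 - k) * σ ≤ (m : ℝ) - g k)
    (h3 : 0 < σ) (h4 : σ < 1) :
    (σ, (m : ℝ) - ((n : ℝ) + 1) * σ) ∈ Fib n g ∧
      hgt n (σ, (m : ℝ) - ((n : ℝ) + 1) * σ) = m := by
  have e0 := h2 0 (Nat.zero_le n)
  have e1 := h1 0 (Nat.zero_le n)
  rw [hg0] at e0 e1
  push_cast at e0 e1
  have hρ0 : 0 ≤ (m : ℝ) - ((n : ℝ) + 1) * σ := by nlinarith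
  have hρ1 : (m : ℝ) - ((n : ℝ) + 1) * σ < 1 := by nlinarith
  refine ⟨⟨⟨h3, h4, hρ0, hρ1⟩, fun k hk => ?_⟩, by simp only [hgt]; ring⟩
  have a1 := h1 k hk
  have a2 := h2 k hk
  constructor
  · simp only
    nlinarith
  · simp only
    nlinarith

/-- tip extraction from a split -/
lemma split_tip {n : ℕ} {g : ℕ → ℤ} {m : ℤ} (hm : m ∈ Splits n g) :
    ∃ σ₀ : ℝ, 0 < σ₀ ∧ σ₀ < 1 ∧
      (∀ k ≤ n, ((m : ℝ) - g k - 1) < ((n : ℝ) + 1 - k) * σ₀ ∧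
        ((n : ℝ) + 1 - k) * σ₀ ≤ (m : ℝ) - g k) := by
  obtain ⟨p, hp, hpm⟩ := splits_line hm
  obtain ⟨⟨d1, d2, d3, d4⟩, hk⟩ := hp
  refine ⟨p.1, d1, d2, fun k hkn => ?_⟩
  obtain ⟨b1, b2⟩ := hk k hkn
  have hρ : p.2 = (m : ℝ) - ((n : ℝ) + 1) * p.1 := by
    simp only [hgt] at hpm; linarith
  rw [hρ] at b1 b2
  constructor <;> nlinarith

lemma sigmaStar_le_ub {n : ℕ} (g : ℕ → ℤ) (m : ℤ) {k : ℕ} (hk : k ≤ n) :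
    ((sigmaStar n g m : ℚ) : ℝ) * ((n : ℝ) + 1 - k) ≤ (m : ℝ) - g k := by
  have h1 : sigmaStar n g m ≤ ubq n g m k :=
    le_trans (min_le_right _ _) (Finset.inf'_le _ (Finset.mem_range.mpr (Nat.lt_succ_of_le hk)))
  have hc := cq_pos hk
  rw [ubq, le_div_iff₀ hc] at h1
  have h2 : ((sigmaStar n g m : ℚ) : ℝ) * ((n + 1 - k : ℕ) : ℝ) ≤ (m : ℝ) - g k := by
    exact_mod_cast h1
  rw [cq_cast_real hk] at h2
  exact h2

lemma sigmaStar_le_one (n : ℕ) (g : ℕ → ℤ) (m : ℤ) : sigmaStar n g m ≤ 1 :=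
  min_le_left _ _

lemma tip_le_sigmaStar {n : ℕ} {g : ℕ → ℤ} {m : ℤ} {σ₀ : ℝ}
    (h4 : σ₀ < 1)
    (h2 : ∀ k ≤ n, ((n : ℝ) + 1 - k) * σ₀ ≤ (m : ℝ) - g k) :
    σ₀ ≤ ((sigmaStar n g m : ℚ) : ℝ) := by
  rw [sigmaStar]
  push_cast [Rat.cast_min]
  apply le_min h4.le
  obtain ⟨k0, hk0, heq⟩ := Finset.exists_mem_eq_inf' (range_ne n) (ubq n g m)
  rw [heq]
  have hk0n : k0 ≤ n := Nat.lt_succ_iff.mp (Finset.mem_range.mp hk0)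
  have hc := cq_pos hk0n
  have hcr : (0:ℝ) < ((n + 1 - k0 : ℕ) : ℝ) := by exact_mod_cast hc
  have : ((ubq n g m k0 : ℚ) : ℝ) = ((m : ℝ) - g k0) / ((n + 1 - k0 : ℕ) : ℝ) := by
    rw [ubq]
    push_cast
    ring
  rw [this, le_div_iff₀ hcr, cq_cast_real hk0n]
  have := h2 k0 hk0n
  nlinarith

lemma sigmaStar_pos {n : ℕ} {g : ℕ → ℤ} {m : ℤ} (hm : m ∈ Splits n g) :
    0 < sigmaStar n g m := by
  obtain ⟨σ₀, hp, h1, hcond⟩ := split_tip hm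
  have : σ₀ ≤ ((sigmaStar n g m : ℚ) : ℝ) :=
    tip_le_sigmaStar h1 (fun k hk => (hcond k hk).2)
  have : (0:ℝ) < ((sigmaStar n g m : ℚ) : ℝ) := lt_of_lt_of_le hp this
  exact_mod_cast this

lemma sigmaStar_den {n : ℕ} (g : ℕ → ℤ) (m : ℤ) : (sigmaStar n g m).den ≤ n + 1 := by
  rcases le_total 1 ((Finset.range (n+1)).inf' (range_ne n) (ubq n g m)) with h | h
  · rw [sigmaStar, min_eq_left h]
    simp
  · rw [sigmaStar, min_eq_right h]
    obtain ⟨k0, hk0, heq⟩ := Finset.exists_mem_eq_inf' (range_ne n) (ubq n g m)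
    rw [heq, ubq]
    have hk0n : k0 ≤ n := Nat.lt_succ_iff.mp (Finset.mem_range.mp hk0)
    have hpos : 0 < n + 1 - k0 := by omega
    have hrw : (((m - g k0 : ℤ) : ℚ) / ((n + 1 - k0 : ℕ) : ℚ))
        = Rat.divInt (m - g k0) ((n + 1 - k0 : ℕ) : ℤ) := by
      rw [Rat.divInt_eq_div]
      norm_cast
    rw [hrw]
    have hdvd := Rat.den_dvd (m - g k0) ((n + 1 - k0 : ℕ) : ℤ)
    have hdvd' : (Rat.divInt (m - g k0) ((n + 1 - k0 : ℕ) : ℤ)).den ∣ (n + 1 - k0) := by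
      exact_mod_cast hdvd
    exact le_trans (Nat.le_of_dvd hpos hdvd') (by omega)


lemma sigmaStar_injOn (n : ℕ) :
    Set.InjOn (fun x => sigmaStar n x.1 x.2) (Sset n) := by
  rintro ⟨g, m⟩ ⟨hgA, hgm⟩ ⟨g', m'⟩ ⟨hgA', hgm'⟩ heq
  simp only at heq
  dsimp only at hgA hgm hgA' hgm'
  set s : ℝ := ((sigmaStar n g m : ℚ) : ℝ) with hs
  have hs' : ((sigmaStar n g' m' : ℚ) : ℝ) = s := by rw [hs, heq]
  obtain ⟨σ₁, hσ₁p, hσ₁l, hc₁⟩ := split_tip hgm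
  obtain ⟨σ₂, hσ₂p, hσ₂l, hc₂⟩ := split_tip hgm'
  set σ : ℝ := max σ₁ σ₂ with hσ
  have hσp : 0 < σ := lt_max_of_lt_left hσ₁p
  have hσl : σ < 1 := max_lt hσ₁l hσ₂l
  have hσs : σ ≤ s := by
    apply max_le
    · exact tip_le_sigmaStar hσ₁l (fun k hk => (hc₁ k hk).2)
    · rw [← hs']; exact tip_le_sigmaStar hσ₂l (fun k hk => (hc₂ k hk).2)
  have hP : (σ, (m : ℝ) - ((n : ℝ) + 1) * σ) ∈ Fib n g := by
    apply (point_in_fib (A_zero hgA) ?_ ?_ hσp hσl).1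
    · intro k hk
      calc ((m : ℝ) - g k - 1) < ((n : ℝ) + 1 - k) * σ₁ := (hc₁ k hk).1
        _ ≤ ((n : ℝ) + 1 - k) * σ := by
          apply mul_le_mul_of_nonneg_left (le_max_left _ _) (cr_pos hk).le
    · intro k hk
      calc ((n : ℝ) + 1 - k) * σ ≤ ((n : ℝ) + 1 - k) * s := by
            apply mul_le_mul_of_nonneg_left hσs (cr_pos hk).le
        _ = s * ((n : ℝ) + 1 - k) := by ring
        _ ≤ (m : ℝ) - g k := sigmaStar_le_ub g m hk
  have hP' : (σ, (m' : ℝ) - ((n : ℝ) + 1) * σ) ∈ Fib n g' := by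
    apply (point_in_fib (A_zero hgA') ?_ ?_ hσp hσl).1
    · intro k hk
      calc ((m' : ℝ) - g' k - 1) < ((n : ℝ) + 1 - k) * σ₂ := (hc₂ k hk).1
        _ ≤ ((n : ℝ) + 1 - k) * σ := by
          apply mul_le_mul_of_nonneg_left (le_max_right _ _) (cr_pos hk).le
    · intro k hk
      calc ((n : ℝ) + 1 - k) * σ ≤ ((n : ℝ) + 1 - k) * s := by
            apply mul_le_mul_of_nonneg_left hσs (cr_pos hk).le
        _ = s * ((n : ℝ) + 1 - k) := by ring
        _ ≤ (m' : ℝ) - g' k := by rw [hs, heq]; exact sigmaStar_le_ub g' m' hk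
  -- the two intercepts both lie in [0,1), hence m = m'
  obtain ⟨hD1, hkg⟩ := hP
  obtain ⟨hD2, hkg'⟩ := hP'
  have r1 : (0:ℝ) ≤ (m : ℝ) - ((n : ℝ) + 1) * σ := hD1.2.2.1
  have r2 : (m : ℝ) - ((n : ℝ) + 1) * σ < 1 := hD1.2.2.2
  have r3 : (0:ℝ) ≤ (m' : ℝ) - ((n : ℝ) + 1) * σ := hD2.2.2.1
  have r4 : (m' : ℝ) - ((n : ℝ) + 1) * σ < 1 := hD2.2.2.2
  have hmm : m = m' := by
    have a1 : (m : ℝ) < m' + 1 := by linarith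
    have a2 : (m' : ℝ) < m + 1 := by linarith
    have b1 : m < m' + 1 := by exact_mod_cast a1
    have b2 : m' < m + 1 := by exact_mod_cast a2
    omega
  have hgg : g = g' := by
    funext k
    by_cases hk : k ≤ n
    · have c1 : (g k : ℝ) ≤ k * σ + ((m : ℝ) - ((n : ℝ) + 1) * σ) := (hkg k hk).1
      have c2 : (k : ℝ) * σ + ((m : ℝ) - ((n : ℝ) + 1) * σ) < g k + 1 := (hkg k hk).2
      have c3 : (g' k : ℝ) ≤ k * σ + ((m' : ℝ) - ((n : ℝ) + 1) * σ) := (hkg' k hk).1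
      have c4 : (k : ℝ) * σ + ((m' : ℝ) - ((n : ℝ) + 1) * σ) < g' k + 1 := (hkg' k hk).2
      rw [hmm] at c1 c2
      have d1 : (g k : ℝ) < g' k + 1 := by linarith
      have d2 : (g' k : ℝ) < g k + 1 := by linarith
      have e1 : g k < g' k + 1 := by exact_mod_cast d1
      have e2 : g' k < g k + 1 := by exact_mod_cast d2
      omega
    · rw [A_pad hgA k (Nat.not_le.mp hk), A_pad hgA' k (Nat.not_le.mp hk)]
  rw [Prod.mk.injEq]
  exact ⟨hgg, hmm⟩


lemma sigmaStar_surj (n : ℕ) {p q : ℕ} (hp1 : 1 ≤ p) (hpq : p ≤ q) (hq : q ≤ n+1)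
    (hco : Nat.Coprime p q) :
    ∃ x ∈ Sset n, sigmaStar n x.1 x.2 = (p : ℚ) / (q : ℚ) := by
  have hq1 : 1 ≤ q := le_trans hp1 hpq
  have hq0 : (0:ℚ) < q := by exact_mod_cast hq1
  set s : ℚ := (p : ℚ) / q with hsdef
  have hs_pos : 0 < s := by
    apply div_pos _ hq0
    exact_mod_cast hp1
  have hs1 : s ≤ 1 := by
    rw [hsdef, div_le_one hq0]
    exact_mod_cast hpq
  set m : ℤ := ⌈((n:ℚ)+1) * s⌉ with hmdef
  set g : ℕ → ℤ := fun k => if k ≤ n then m - ⌈((n:ℚ)+1-(k:ℚ)) * s⌉ else 0 with hgdef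
  have hg0 : g 0 = 0 := by simp [hgdef, hmdef]
  have hpad : ∀ k, n < k → g k = 0 := by
    intro k hk; simp [hgdef, Nat.not_le.mpr hk]
  have hgk : ∀ k ≤ n, m - g k = ⌈((n:ℚ)+1-(k:ℚ)) * s⌉ := by
    intro k hk; simp [hgdef, hk]
  -- ceiling bounds, rational
  have hceil2 : ∀ k : ℕ, k ≤ n → ((n:ℚ)+1-(k:ℚ)) * s ≤ (⌈((n:ℚ)+1-(k:ℚ)) * s⌉ : ℚ) :=
    fun k _ => Int.le_ceil _
  have hceil1 : ∀ k : ℕ, k ≤ n → (⌈((n:ℚ)+1-(k:ℚ)) * s⌉ : ℚ) - 1 < ((n:ℚ)+1-(k:ℚ)) * s := by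
    intro k _
    have := Int.ceil_lt_add_one (((n:ℚ)+1-(k:ℚ)) * s)
    linarith
  have hcq : ∀ k : ℕ, k ≤ n → (0:ℚ) < (n:ℚ)+1-(k:ℚ) := by
    intro k hk
    rw [← cq_cast hk]; exact cq_pos hk
  -- choose σq rational slightly below s
  set lb : ℕ → ℚ := fun k => ((⌈((n:ℚ)+1-(k:ℚ)) * s⌉ : ℚ) - 1) / ((n:ℚ)+1-(k:ℚ)) with hlbdef
  have hlb_lt : ∀ k ≤ n, lb k < s := by
    intro k hk
    rw [hlbdef]
    simp only
    rw [div_lt_iff₀ (hcq k hk)]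
    have := hceil1 k hk
    linarith [mul_comm s ((n:ℚ)+1-(k:ℚ))]
  set Lf : Finset ℚ := insert 0 ((Finset.range (n+1)).image lb) with hLf
  have hLne : Lf.Nonempty := ⟨0, by simp [hLf]⟩
  set L : ℚ := Lf.max' hLne with hL
  have hLs : L < s := by
    rw [hL, Finset.max'_lt_iff]
    intro y hy
    rw [hLf, Finset.mem_insert] at hy
    rcases hy with rfl | hy
    · exact hs_pos
    · obtain ⟨k, hk, rfl⟩ := Finset.mem_image.mp hy
      exact hlb_lt k (Nat.lt_succ_iff.mp (Finset.mem_range.mp hk))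
  have hL0 : (0:ℚ) ≤ L := Finset.le_max' _ _ (by simp [hLf])
  set σq : ℚ := (L + s)/2 with hσq
  have hσqL : L < σq := by rw [hσq]; linarith
  have hσqs : σq < s := by rw [hσq]; linarith
  have hσq0 : 0 < σq := lt_of_le_of_lt hL0 hσqL
  have hσq1 : σq < 1 := lt_of_lt_of_le hσqs hs1
  have hAq : ∀ k ≤ n, (⌈((n:ℚ)+1-(k:ℚ)) * s⌉ : ℚ) - 1 < ((n:ℚ)+1-(k:ℚ)) * σq := by
    intro k hk
    have h1 : lb k ≤ L := Finset.le_max' _ _ (by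
      rw [hLf]
      exact Finset.mem_insert_of_mem (Finset.mem_image_of_mem lb
        (Finset.mem_range.mpr (Nat.lt_succ_of_le hk))))
    have h2 : lb k < σq := lt_of_le_of_lt h1 hσqL
    rw [hlbdef] at h2
    simp only at h2
    rw [div_lt_iff₀ (hcq k hk)] at h2
    linarith [mul_comm σq ((n:ℚ)+1-(k:ℚ))]
  have hBq : ∀ k ≤ n, ((n:ℚ)+1-(k:ℚ)) * σq ≤ (⌈((n:ℚ)+1-(k:ℚ)) * s⌉ : ℚ) := by
    intro k hk
    have := mul_lt_mul_of_pos_left hσqs (hcq k hk)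
    linarith [hceil2 k hk]
  -- pass to ℝ
  set σ : ℝ := ((σq : ℚ) : ℝ) with hσ
  have h3 : (0:ℝ) < σ := by rw [hσ]; exact_mod_cast hσq0
  have h4 : σ < 1 := by rw [hσ]; exact_mod_cast hσq1
  have h1 : ∀ k ≤ n, ((m : ℝ) - g k - 1) < ((n : ℝ) + 1 - k) * σ := by
    intro k hk
    have e : ((m : ℚ) - g k) = (⌈((n:ℚ)+1-(k:ℚ)) * s⌉ : ℚ) := by exact_mod_cast hgk k hk
    have hr : (m : ℚ) - g k - 1 < ((n:ℚ)+1-(k:ℚ)) * σq := by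
      rw [e]; exact hAq k hk
    rw [hσ]
    exact_mod_cast hr
  have h2 : ∀ k ≤ n, ((n : ℝ) + 1 - k) * σ ≤ (m : ℝ) - g k := by
    intro k hk
    have e : ((m : ℚ) - g k) = (⌈((n:ℚ)+1-(k:ℚ)) * s⌉ : ℚ) := by exact_mod_cast hgk k hk
    have hr : ((n:ℚ)+1-(k:ℚ)) * σq ≤ (m : ℚ) - g k := by
      rw [e]; exact hBq k hk
    rw [hσ]
    exact_mod_cast hr
  obtain ⟨hyF, hyH⟩ := point_in_fib hg0 h1 h2 h3 h4
  have hgA : g ∈ A n := mem_A_of_fib hpad hyF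
  -- the second point, strictly below the line
  set ε : ℝ := ((s:ℚ):ℝ) - σ with hε
  have hσlts : σ < ((s:ℚ):ℝ) := by
    rw [hσ]
    exact_mod_cast hσqs
  have hε0 : 0 < ε := by
    rw [hε]
    linarith
  have hσles : σ ≤ ((s:ℚ):ℝ) := hσlts.le
  have hms : ((n:ℝ)+1) * ((s:ℚ):ℝ) ≤ (m:ℝ) := by
    have : ((n:ℚ)+1) * s ≤ (m:ℚ) := Int.le_ceil _
    exact_mod_cast this
  have hxF : (σ, (m : ℝ) - ((n : ℝ) + 1) * σ - ε) ∈ Fib n g := by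
    have hρy0 : (0:ℝ) ≤ (m : ℝ) - ((n : ℝ) + 1) * σ := hyF.1.2.2.1
    have hρy1 : (m : ℝ) - ((n : ℝ) + 1) * σ < 1 := hyF.1.2.2.2
    refine ⟨⟨h3, h4, ?_, ?_⟩, fun k hk => ?_⟩
    · -- 0 ≤ ρx
      simp only
      have hnn : (0:ℝ) ≤ (n:ℝ) := Nat.cast_nonneg n
      have : (n:ℝ) * σ ≤ (n:ℝ) * ((s:ℚ):ℝ) := mul_le_mul_of_nonneg_left hσles hnn
      rw [hε]
      nlinarith
    · simp only
      linarith
    · have hy := hyF.2 k hk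
      have c1 : (g k : ℝ) ≤ k * σ + ((m:ℝ) - ((n:ℝ)+1) * σ) := hy.1
      have c2 : (k:ℝ) * σ + ((m:ℝ) - ((n:ℝ)+1) * σ) < g k + 1 := hy.2
      constructor
      · -- lower bound with the ε slack
        simp only
        have e : ((m : ℝ) - g k) = ((⌈((n:ℚ)+1-(k:ℚ)) * s⌉ : ℚ) : ℝ) := by
          exact_mod_cast hgk k hk
        have hcs : (((n:ℚ)+1-(k:ℚ)) * s : ℚ) ≤ ((⌈((n:ℚ)+1-(k:ℚ)) * s⌉ : ℚ)) := Int.le_ceil _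
        have hcsr : ((n:ℝ)+1-(k:ℝ)) * ((s:ℚ):ℝ) ≤ ((⌈((n:ℚ)+1-(k:ℚ)) * s⌉ : ℚ) : ℝ) := by
          exact_mod_cast hcs
        have hkn : (k:ℝ) ≤ (n:ℝ) := by exact_mod_cast hk
        have hmono : ((n:ℝ)-(k:ℝ)) * σ ≤ ((n:ℝ)-(k:ℝ)) * ((s:ℚ):ℝ) :=
          mul_le_mul_of_nonneg_left hσles (by linarith)
        rw [hε]
        nlinarith
      · simp only
        linarith
  have hSplit : (g, m) ∈ Sset n := by
    refine ⟨hgA, ⟨⟨(σ, (m : ℝ) - ((n : ℝ) + 1) * σ - ε), hxF, ?_⟩,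
      ⟨(σ, (m : ℝ) - ((n : ℝ) + 1) * σ), hyF, by rw [hyH]⟩⟩⟩
    simp only [hgt]
    linarith
  refine ⟨(g, m), hSplit, ?_⟩
  -- compute sigmaStar
  have hub : ∀ k ∈ Finset.range (n+1), s ≤ ubq n g m k := by
    intro k hkr
    have hk : k ≤ n := Nat.lt_succ_iff.mp (Finset.mem_range.mp hkr)
    rw [ubq]
    rw [le_div_iff₀ (cq_pos hk)]
    have e : ((m - g k : ℤ) : ℚ) = (⌈((n:ℚ)+1-(k:ℚ)) * s⌉ : ℚ) := by exact_mod_cast hgk k hk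
    rw [e, cq_cast hk]
    have := hceil2 k hk
    linarith [mul_comm s ((n:ℚ)+1-(k:ℚ))]
  have hkstar : n + 1 - q ≤ n := by omega
  have hqeq : n + 1 - (n + 1 - q) = q := by omega
  have hstar : ubq n g m (n + 1 - q) = s := by
    rw [ubq]
    have e : ((m - g (n+1-q) : ℤ) : ℚ) = (⌈((n:ℚ)+1-((n+1-q : ℕ):ℚ)) * s⌉ : ℚ) := by
      exact_mod_cast hgk (n+1-q) hkstar
    have hc : ((n:ℚ)+1-((n+1-q : ℕ):ℚ)) = (q:ℚ) := by
      rw [← cq_cast hkstar, hqeq]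
    rw [e, hc, hqeq]
    have hqs : (q:ℚ) * s = (p:ℚ) := by
      rw [hsdef]
      field_simp
    rw [hqs]
    have : (⌈(p:ℚ)⌉ : ℚ) = (p:ℚ) := by
      norm_cast
      simp
    rw [this, hsdef]
  have hinf : (Finset.range (n+1)).inf' (range_ne n) (ubq n g m) = s := by
    apply le_antisymm
    · rw [← hstar]
      exact Finset.inf'_le _ (Finset.mem_range.mpr (by omega))
    · exact Finset.le_inf' _ _ hub
  rw [sigmaStar, hinf, min_eq_right hs1, hsdef]


lemma sigmaStar_pos' {n : ℕ} {x : (ℕ → ℤ) × ℤ} (hx : x ∈ Sset n) :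
    0 < sigmaStar n x.1 x.2 := sigmaStar_pos hx.2

def FPset (n : ℕ) : Set (ℕ × ℕ) :=
  {x | 1 ≤ x.1 ∧ x.1 ≤ x.2 ∧ x.2 ≤ n + 1 ∧ Nat.Coprime x.1 x.2}

noncomputable def Fmap (n : ℕ) (x : (ℕ → ℤ) × ℤ) : ℕ × ℕ :=
  ((sigmaStar n x.1 x.2).num.toNat, (sigmaStar n x.1 x.2).den)

lemma num_le_den_of_le_one {s : ℚ} (h : s ≤ 1) : s.num ≤ (s.den : ℤ) := by
  have h2 : ((s.num : ℚ)) / ((s.den : ℚ)) = s := Rat.num_div_den s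
  have h3 : (0:ℚ) < (s.den : ℚ) := by exact_mod_cast s.pos
  have h4 : ((s.num : ℚ)) ≤ ((s.den : ℚ)) := by
    rw [div_eq_iff (ne_of_gt h3)] at h2
    calc ((s.num : ℚ)) = s * s.den := h2
      _ ≤ 1 * s.den := by apply mul_le_mul_of_nonneg_right h h3.le
      _ = s.den := one_mul _
  exact_mod_cast h4

lemma Fmap_mem {n : ℕ} {x : (ℕ → ℤ) × ℤ} (hx : x ∈ Sset n) : Fmap n x ∈ FPset n := by
  have hpos : 0 < sigmaStar n x.1 x.2 := sigmaStar_pos' hx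
  have hnum : 0 < (sigmaStar n x.1 x.2).num := Rat.num_pos.mpr hpos
  have hle1 : sigmaStar n x.1 x.2 ≤ 1 := sigmaStar_le_one n x.1 x.2
  have hden : (sigmaStar n x.1 x.2).den ≤ n + 1 := sigmaStar_den x.1 x.2
  have hnumden : (sigmaStar n x.1 x.2).num ≤ ((sigmaStar n x.1 x.2).den : ℤ) :=
    num_le_den_of_le_one hle1
  refine ⟨?_, ?_, hden, ?_⟩
  · simp only [Fmap]
    omega
  · simp only [Fmap]
    omega
  · have hred := (sigmaStar n x.1 x.2).reduced
    have heq : (sigmaStar n x.1 x.2).num.natAbs = (sigmaStar n x.1 x.2).num.toNat := by omega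
    rw [heq] at hred
    exact hred

lemma Fmap_image (n : ℕ) : Fmap n '' Sset n = FPset n := by
  apply Set.Subset.antisymm
  · rintro _ ⟨x, hx, rfl⟩
    exact Fmap_mem hx
  · rintro ⟨p, q⟩ ⟨hp1, hpq, hq, hco⟩
    obtain ⟨x, hx, hse⟩ := sigmaStar_surj n hp1 hpq hq hco
    refine ⟨x, hx, ?_⟩
    have hq1 : 1 ≤ q := le_trans hp1 hpq
    have hq0 : (0:ℤ) < (q:ℤ) := by exact_mod_cast hq1
    have hnum : ((p:ℚ)/(q:ℚ)).num = (p:ℤ) := by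
      have : ((p:ℚ)/(q:ℚ)) = (((p:ℤ):ℚ))/(((q:ℤ):ℚ)) := by push_cast; ring
      rw [this]
      apply Rat.num_div_eq_of_coprime hq0
      simpa using hco
    have hden : (((p:ℚ)/(q:ℚ)).den : ℤ) = (q:ℤ) := by
      have : ((p:ℚ)/(q:ℚ)) = (((p:ℤ):ℚ))/(((q:ℤ):ℚ)) := by push_cast; ring
      rw [this]
      apply Rat.den_div_eq_of_coprime hq0
      simpa using hco
    simp only [Fmap, hse, hnum, hden]
    have : ((p:ℤ)).toNat = p := Int.toNat_natCast p
    rw [this]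
    have : ((p:ℚ)/(q:ℚ)).den = q := by exact_mod_cast hden
    rw [this]

lemma Fmap_injOn (n : ℕ) : Set.InjOn (Fmap n) (Sset n) := by
  intro x hx x' hx' h
  apply sigmaStar_injOn n hx hx'
  simp only
  simp only [Fmap, Prod.mk.injEq] at h
  have h1 : 0 < (sigmaStar n x.1 x.2).num := Rat.num_pos.mpr (sigmaStar_pos' hx)
  have h2 : 0 < (sigmaStar n x'.1 x'.2).num := Rat.num_pos.mpr (sigmaStar_pos' hx')
  have hnum : (sigmaStar n x.1 x.2).num = (sigmaStar n x'.1 x'.2).num := by omega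
  exact Rat.ext hnum h.2

lemma Sset_ncard (n : ℕ) : (Sset n).ncard = (FPset n).ncard := by
  rw [← Fmap_image n, Set.ncard_image_of_injOn (Fmap_injOn n)]

-- counting FPset
lemma totient_Icc (q : ℕ) (hq : 1 ≤ q) :
    ((Finset.Icc 1 q).filter (fun p => Nat.Coprime p q)).card = q.totient := by
  rcases Nat.eq_or_lt_of_le hq with rfl | hq2
  · decide
  · have hq2' : 2 ≤ q := hq2
    rw [Nat.totient_eq_card_coprime]
    congr 1
    ext a
    simp only [Finset.mem_filter, Finset.mem_Icc, Finset.mem_range]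
    constructor
    · rintro ⟨⟨ha1, ha2⟩, hco⟩
      have : a ≠ q := by
        rintro rfl
        rw [Nat.coprime_self] at hco
        omega
      refine ⟨by omega, ?_⟩
      rwa [Nat.coprime_comm]
    · rintro ⟨ha, hco⟩
      rw [Nat.coprime_comm] at hco
      have : a ≠ 0 := by
        rintro rfl
        have : q = 1 := by simpa [Nat.coprime_zero_left] using hco
        omega
      exact ⟨⟨by omega, by omega⟩, hco⟩

noncomputable def FPfin (n : ℕ) : Finset (ℕ × ℕ) :=
  (Finset.Icc 1 (n+1)).biUnion
    (fun q => ((Finset.Icc 1 q).filter (fun p => Nat.Coprime p q)).image (fun p => (p, q)))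

lemma FPset_eq (n : ℕ) : FPset n = ↑(FPfin n) := by
  ext ⟨p, q⟩
  simp only [FPset, Set.mem_setOf_eq, FPfin, Finset.coe_biUnion, Set.mem_iUnion,
    Finset.mem_coe, Finset.mem_image, Finset.mem_filter, Finset.mem_Icc]
  constructor
  · rintro ⟨h1, h2, h3, h4⟩
    exact ⟨q, ⟨le_trans h1 h2, h3⟩, p, ⟨⟨h1, h2⟩, h4⟩, rfl⟩
  · rintro ⟨q', ⟨hq1, hq2⟩, p', ⟨⟨hp1, hp2⟩, hco⟩, heq⟩
    injection heq with e1 e2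
    subst e1; subst e2
    exact ⟨hp1, hp2, hq2, hco⟩

lemma FPfin_card (n : ℕ) : (FPfin n).card = ∑ q ∈ Finset.Icc 1 (n+1), q.totient := by
  rw [FPfin, Finset.card_biUnion]
  · apply Finset.sum_congr rfl
    intro q hq
    rw [Finset.card_image_of_injective _ (fun a b h => (Prod.mk.injEq ..).mp h |>.1)]
    exact totient_Icc q (Finset.mem_Icc.mp hq).1
  · intro q hq q' hq' hne
    simp only [Finset.disjoint_left]
    rintro ⟨a, b⟩ hab hab'
    simp only [Finset.mem_image, Finset.mem_filter] at hab hab'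
    obtain ⟨p1, _, h1⟩ := hab
    obtain ⟨p2, _, h2⟩ := hab'
    injection h1 with _ e1
    injection h2 with _ e2
    exact hne (e1.trans e2.symm)

lemma FPset_ncard (n : ℕ) : (FPset n).ncard = ∑ q ∈ Finset.Icc 1 (n+1), q.totient := by
  rw [FPset_eq, Set.ncard_coe_finset, FPfin_card]


lemma range_ne' (n : ℕ) : (Finset.range (n+1)).Nonempty := ⟨0, by simp⟩

lemma A_zero_eq : A 0 = {fun _ => (0:ℤ)} := by
  ext g
  constructor
  · intro hg
    have h0 := A_zero hg
    have hp := A_pad hg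
    funext k
    rcases Nat.eq_zero_or_pos k with rfl | hk
    · exact h0
    · exact hp k hk
  · rintro rfl
    refine ⟨1/2, 0, ⟨by norm_num, by norm_num, le_refl 0, by norm_num⟩, ?_⟩
    funext k
    simp only [vec]
    rcases Nat.eq_zero_or_pos k with rfl | hk
    · norm_num
    · rw [if_neg (by omega)]

lemma A_card (n : ℕ) :
    (A n).ncard = 1 + ∑ q ∈ Finset.Icc 1 n, q.totient * (n + 1 - q) := by
  induction n with
  | zero =>
    rw [A_zero_eq, Set.ncard_singleton]
    simp
  | succ n ih =>
    rw [step_card n, ih, Sset_ncard n, FPset_ncard n]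
    have e1 : ∑ q ∈ Finset.Icc 1 (n+1), q.totient * (n + 1 + 1 - q)
        = (∑ q ∈ Finset.Icc 1 (n+1), q.totient * (n + 1 - q))
          + ∑ q ∈ Finset.Icc 1 (n+1), q.totient := by
      rw [← Finset.sum_add_distrib]
      apply Finset.sum_congr rfl
      intro q hq
      obtain ⟨h1, h2⟩ := Finset.mem_Icc.mp hq
      have : n + 1 + 1 - q = (n + 1 - q) + 1 := by omega
      rw [this, Nat.mul_add, Nat.mul_one]
    have e2 : ∑ q ∈ Finset.Icc 1 (n+1), q.totient * (n + 1 - q)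
        = ∑ q ∈ Finset.Icc 1 n, q.totient * (n + 1 - q) := by
      rw [Finset.sum_Icc_succ_top (by omega)]
      simp
    rw [e1, e2]
    ring

-- irrational representative
lemma exists_irr {n : ℕ} {g : ℕ → ℤ} (hg : g ∈ A n) :
    ∃ σ ρ : ℝ, Irrational σ ∧ Dom σ ρ ∧ vec n σ ρ = g := by
  obtain ⟨σ, ρ, hD, rfl⟩ := hg
  obtain ⟨hσ0, hσ1, hρ0, hρ1⟩ := hD
  set f : ℕ → ℤ := fun k => ⌊(k : ℝ) * σ + ρ⌋ with hf
  -- step 1 : bump ρ up so that all inequalities become strict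
  set ε₁ : ℝ := (Finset.range (n+1)).inf' (range_ne' n)
      (fun k => ((f k : ℝ) + 1) - ((k:ℝ) * σ + ρ)) with hε₁
  have hε₁pos : 0 < ε₁ := by
    rw [hε₁, Finset.lt_inf'_iff]
    intro k _
    have := Int.lt_floor_add_one ((k:ℝ) * σ + ρ)
    simp only [hf]
    linarith
  set ε : ℝ := min ε₁ (1 - ρ) / 2 with hε
  have hεpos : 0 < ε := by
    rw [hε]
    have : 0 < min ε₁ (1-ρ) := lt_min hε₁pos (by linarith)
    linarith
  have hεlt : ε < ε₁ := by
    rw [hε]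
    have : min ε₁ (1-ρ) ≤ ε₁ := min_le_left _ _
    linarith
  have hρ1' : ρ + ε < 1 := by
    have h1 : min ε₁ (1-ρ) ≤ 1 - ρ := min_le_right _ _
    rw [hε]
    linarith
  have hstrict : ∀ k ≤ n, (f k : ℝ) < (k:ℝ) * σ + (ρ + ε) ∧
      (k:ℝ) * σ + (ρ + ε) < f k + 1 := by
    intro k hk
    have hfl : (f k : ℝ) ≤ (k:ℝ) * σ + ρ := Int.floor_le _
    have hgap : ε₁ ≤ ((f k : ℝ) + 1) - ((k:ℝ) * σ + ρ) := by
      rw [hε₁]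
      exact Finset.inf'_le _ (Finset.mem_range.mpr (by omega))
    constructor
    · linarith
    · linarith
  -- step 2 : margin and irrational slope
  set M : ℝ := (Finset.range (n+1)).inf' (range_ne' n)
      (fun k => min ((k:ℝ) * σ + (ρ + ε) - f k) ((f k : ℝ) + 1 - ((k:ℝ) * σ + (ρ + ε)))) with hM
  have hMpos : 0 < M := by
    rw [hM, Finset.lt_inf'_iff]
    intro k hkr
    have hk : k ≤ n := by
      have := Finset.mem_range.mp hkr
      omega
    obtain ⟨a, b⟩ := hstrict k hk
    exact lt_min (by linarith) (by linarith)
  set δ : ℝ := min σ (M / (n+1)) with hδ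
  have hδpos : 0 < δ := by
    rw [hδ]
    apply lt_min hσ0
    positivity
  obtain ⟨σ', hirr, hσ'l, hσ'u⟩ := exists_irrational_btwn (show σ - δ < σ by linarith)
  have hσ'0 : 0 < σ' := by
    have : δ ≤ σ := by rw [hδ]; exact min_le_left _ _
    linarith
  have hσ'1 : σ' < 1 := by linarith
  have hkey : ∀ k ≤ n, (k:ℝ) * σ - (k:ℝ) * σ' < M := by
    intro k hk
    have hkn : (k:ℝ) ≤ (n:ℝ) := by exact_mod_cast hk
    have h1 : σ - σ' < δ := by linarith
    have h2 : 0 ≤ σ - σ' := by linarith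
    have h3 : (k:ℝ) * (σ - σ') ≤ (n:ℝ) * (σ - σ') := by
      apply mul_le_mul_of_nonneg_right hkn h2
    have h4 : (n:ℝ) * (σ - σ') ≤ (n:ℝ) * δ := by
      apply mul_le_mul_of_nonneg_left h1.le (Nat.cast_nonneg n)
    have h5 : δ ≤ M / (n+1) := by rw [hδ]; exact min_le_right _ _
    have h6 : (n:ℝ) * δ ≤ (n:ℝ) * (M / (n+1)) := by
      apply mul_le_mul_of_nonneg_left h5 (Nat.cast_nonneg n)
    have h7 : (n:ℝ) * (M / (n+1)) < M := by
      rw [div_eq_mul_inv]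
      have hpos : (0:ℝ) < (n:ℝ) + 1 := by positivity
      rw [show (n:ℝ) * (M * ((n:ℝ)+1)⁻¹) = ((n:ℝ) * M) / ((n:ℝ)+1) by ring]
      rw [div_lt_iff₀ hpos]
      nlinarith
    nlinarith
  refine ⟨σ', ρ + ε, hirr, ⟨hσ'0, hσ'1, by linarith, hρ1'⟩, ?_⟩
  funext k
  by_cases hk : k ≤ n
  · simp only [vec, hk, if_pos]
    rw [Int.floor_eq_iff]
    obtain ⟨a, b⟩ := hstrict k hk
    have hMle : M ≤ (k:ℝ) * σ + (ρ + ε) - f k := by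
      calc M ≤ min ((k:ℝ) * σ + (ρ + ε) - f k) ((f k : ℝ) + 1 - ((k:ℝ) * σ + (ρ + ε))) := by
            rw [hM]; exact Finset.inf'_le _ (Finset.mem_range.mpr (by omega))
        _ ≤ _ := min_le_left _ _
    have hd := hkey k hk
    have hup : (k:ℝ) * σ' ≤ (k:ℝ) * σ := by
      apply mul_le_mul_of_nonneg_left hσ'u.le (Nat.cast_nonneg k)
    constructor
    · linarith
    · linarith
  · simp [vec, hk]

-- the word map
def W (n : ℕ) (g : ℕ → ℤ) : List ℤ := (List.range n).map (fun k => g (k+1) - g k)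

lemma W_vec {n : ℕ} {σ ρ : ℝ} (hD : Dom σ ρ) : W n (vec n σ ρ) = mechPrefix σ ρ n := by
  unfold W mechPrefix
  apply List.map_congr_left
  intro k hk
  have hkn : k < n := List.mem_range.mp hk
  have h1 : k + 1 ≤ n := hkn
  have h2 : k ≤ n := by omega
  simp only [vec, if_pos h1, if_pos h2, lowerMech]
  congr 2
  push_cast
  ring

lemma map_range_ext {F G : ℕ → ℤ} {n : ℕ}
    (h : (List.range n).map F = (List.range n).map G) : ∀ k < n, F k = G k := by
  intro k hk
  have e : ((List.range n).map F)[k]? = ((List.range n).map G)[k]? := by rw [h]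
  simp only [List.getElem?_map, List.getElem?_range, hk, if_pos] at e
  simpa using e

lemma W_injOn (n : ℕ) : Set.InjOn (W n) (A n) := by
  intro g hg g' hg' h
  have hd := map_range_ext h
  have main : ∀ k, k ≤ n → g k = g' k := by
    intro k
    induction k with
    | zero => intro _; rw [A_zero hg, A_zero hg']
    | succ k ih =>
      intro hk
      have e := hd k (by omega)
      have e2 := ih (by omega)
      omega
  funext k
  by_cases hk : k ≤ n
  · exact main k hk
  · rw [A_pad hg k (by omega), A_pad hg' k (by omega)]

lemma W_image (n : ℕ) : W n '' A n = SturmianFactors n := by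
  ext u
  constructor
  · rintro ⟨g, hg, rfl⟩
    obtain ⟨σ', ρ', hirr, hD', hv⟩ := exists_irr hg
    rw [← hv, W_vec hD']
    exact ⟨σ', ρ', hirr, hD'.1, hD'.2.1, hD'.2.2.1, hD'.2.2.2, rfl⟩
  · rintro ⟨σ, ρ, hirr, h1, h2, h3, h4, rfl⟩
    have hD : Dom σ ρ := ⟨h1, h2, h3, h4⟩
    exact ⟨vec n σ ρ, ⟨σ, ρ, hD, rfl⟩, W_vec hD⟩


end SturmAux


theorem card_sturmian_factors (n : ℕ) :
    Set.ncard (SturmianFactors n) =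
      1 + ∑ q ∈ Finset.Icc 1 n, Nat.totient q * (n + 1 - q) := by
  rw [← SturmAux.W_image n, Set.ncard_image_of_injOn (SturmAux.W_injOn n),
    SturmAux.A_card n]
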